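/- A partition λ is triangular if and only if no vertex of the convex hull of its Ferrers diagram lies in the convex hull of ℕ² \ λ, and no vertex of the convex hull of ℕ² \ λ lies in the convex hull of λ. -/

import Mathlib

open Set

/-- The positive quadrant of lattice points, representing ℕ² in the paper. -/
def posQuad : Set (ℕ × ℕ) := {c | 1 ≤ c.1 ∧ 1 ≤ c.2}

/-- Embedding of lattice cells into the real plane. -/
noncomputable def toR2 (c : ℕ × ℕ) : ℝ × ℝ := ((c.1 : ℝ), (c.2 : ℝ))

/-- A set of cells is triangular if it consists exactly of the points of ℕ²
lying weakly below some line x/r + y/s = 1 with r, s > 0. -/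
def IsTriangularSet (S : Set (ℕ × ℕ)) : Prop :=
  ∃ r s : ℝ, 0 < r ∧ 0 < s ∧
    S = {c : ℕ × ℕ | 1 ≤ c.1 ∧ 1 ≤ c.2 ∧ (c.1 : ℝ) / r + (c.2 : ℝ) / s ≤ 1}

/-- `S` is the Ferrers diagram of an integer partition. -/
def IsPartitionSet (S : Set (ℕ × ℕ)) : Prop :=
  S.Finite ∧ S ⊆ posQuad ∧
    ∀ c ∈ S, ∀ a b : ℕ, 1 ≤ a → a ≤ c.1 → 1 ≤ b → b ≤ c.2 → (a, b) ∈ S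

/-- A cell is removable if deleting it yields a triangular partition. -/
def RemovableCell (S : Set (ℕ × ℕ)) (c : ℕ × ℕ) : Prop :=
  c ∈ S ∧ IsTriangularSet (S \ {c})

/-- A cell of the complement is addable if adjoining it yields a triangular partition. -/
def AddableCell (S : Set (ℕ × ℕ)) (c : ℕ × ℕ) : Prop :=
  c ∈ posQuad \ S ∧ IsTriangularSet (insert c S)

open Pointwise

lemma hull_stab (B : Set (ℝ×ℝ)) (d : ℝ×ℝ) (h : ∀ z ∈ B, z + d ∈ B) :
    ∀ z ∈ convexHull ℝ B, z + d ∈ convexHull ℝ B := by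
  have hconv : Convex ℝ {z : ℝ×ℝ | z + d ∈ convexHull ℝ B} := by
    intro x hx y hy a b ha hb hab
    have he : a • x + b • y + d = a • (x + d) + b • (y + d) := by
      have : a • d + b • d = d := by rw [← add_smul, hab, one_smul]
      rw [smul_add, smul_add]
      rw [show a • x + a • d + (b • y + b • d) = a • x + b • y + (a • d + b • d) by abel, this]
    simp only [mem_setOf_eq, he]
    exact (convex_convexHull ℝ B) hx hy ha hb hab
  exact fun z hz => convexHull_min (fun w hw => (subset_convexHull ℝ B (h w hw) : _)) hconv hz

lemma hull_stab_ray (B : Set (ℝ×ℝ)) (d : ℝ×ℝ) (h : ∀ z ∈ B, z + d ∈ B)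
    {z : ℝ×ℝ} (hz : z ∈ convexHull ℝ B) {t : ℝ} (ht : 0 ≤ t) :
    z + t • d ∈ convexHull ℝ B := by
  have hn : ∀ m : ℕ, z + (m:ℝ) • d ∈ convexHull ℝ B := by
    intro m
    induction m with
    | zero => simpa using hz
    | succ k ih =>
      have := hull_stab B d h _ ih
      have he : z + (k:ℝ) • d + d = z + ((k:ℝ)+1) • d := by
        rw [add_smul, one_smul]; abel
      rw [he] at this
      simpa [Nat.cast_succ] using this
  set n : ℕ := ⌈t⌉₊ + 1 with hndef
  have hpos : (0:ℝ) < n := by positivity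
  have htn : t ≤ (n:ℝ) := le_trans (Nat.le_ceil t) (by exact_mod_cast Nat.le_succ _)
  have hcoef : t / n ≤ 1 := by rw [div_le_one hpos]; exact htn
  have hcoef0 : 0 ≤ t / n := by positivity
  have := (convex_convexHull ℝ B) hz (hn n) (a := 1 - t/n) (b := t/n)
    (by linarith) hcoef0 (by ring)
  have he : (1 - t/n) • z + (t/n) • (z + (n:ℝ) • d) = z + t • d := by
    rw [smul_add, smul_smul]
    rw [show t / n * (n:ℝ) = t by field_simp]
    module
  rwa [he] at this

section
variable {S : Set (ℕ × ℕ)} (hS : IsPartitionSet S)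

lemma comp_right (hS : IsPartitionSet S) :
    ∀ c ∈ posQuad \ S, (c.1 + 1, c.2) ∈ posQuad \ S := by
  rintro ⟨a,b⟩ ⟨⟨h1,h2⟩, hns⟩
  refine ⟨⟨le_trans h1 (Nat.le_succ a), h2⟩, fun hmem => hns ?_⟩
  exact hS.2.2 _ hmem a b h1 (Nat.le_succ a) h2 le_rfl

lemma comp_up (hS : IsPartitionSet S) :
    ∀ c ∈ posQuad \ S, (c.1, c.2 + 1) ∈ posQuad \ S := by
  rintro ⟨a,b⟩ ⟨⟨h1,h2⟩, hns⟩
  refine ⟨⟨h1, le_trans h2 (Nat.le_succ b)⟩, fun hmem => hns ?_⟩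
  exact hS.2.2 _ hmem a b h1 le_rfl h2 (Nat.le_succ b)

lemma B_right (hS : IsPartitionSet S) :
    ∀ z ∈ toR2 '' (posQuad \ S), z + ((1:ℝ),(0:ℝ)) ∈ toR2 '' (posQuad \ S) := by
  rintro z ⟨c, hc, rfl⟩
  exact ⟨(c.1+1, c.2), comp_right hS c hc, by simp [toR2, Prod.ext_iff]⟩

lemma B_up (hS : IsPartitionSet S) :
    ∀ z ∈ toR2 '' (posQuad \ S), z + ((0:ℝ),(1:ℝ)) ∈ toR2 '' (posQuad \ S) := by
  rintro z ⟨c, hc, rfl⟩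
  exact ⟨(c.1, c.2+1), comp_up hS c hc, by simp [toR2, Prod.ext_iff]⟩

lemma cB_add_cone (hS : IsPartitionSet S) {z : ℝ×ℝ}
    (hz : z ∈ convexHull ℝ (toR2 '' (posQuad \ S))) {v : ℝ×ℝ} (h1 : 0 ≤ v.1) (h2 : 0 ≤ v.2) :
    z + v ∈ convexHull ℝ (toR2 '' (posQuad \ S)) := by
  have s1 := hull_stab_ray _ _ (B_right hS) hz h1
  have s2 := hull_stab_ray _ _ (B_up hS) s1 h2
  have : z + v.1 • ((1:ℝ),(0:ℝ)) + v.2 • ((0:ℝ),(1:ℝ)) = z + v := by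
    simp [Prod.ext_iff, Prod.smul_def]
  rwa [this] at s2

lemma exists_bound (hS : IsPartitionSet S) :
    ∃ N : ℕ, 2 ≤ N ∧ ∀ c ∈ S, c.1 < N ∧ c.2 < N := by
  classical
  refine ⟨(hS.1.toFinset.sup fun c => max c.1 c.2) + 2, by omega, fun c hc => ?_⟩
  have hmem : c ∈ hS.1.toFinset := hS.1.mem_toFinset.mpr hc
  have h := Finset.le_sup (f := fun c : ℕ×ℕ => max c.1 c.2) hmem
  have h1 : c.1 ≤ hS.1.toFinset.sup fun c : ℕ×ℕ => max c.1 c.2 := le_trans (le_max_left _ _) h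
  have h2 : c.2 ≤ hS.1.toFinset.sup fun c : ℕ×ℕ => max c.1 c.2 := le_trans (le_max_right _ _) h
  omega

lemma cB_closed (hS : IsPartitionSet S) :
    IsClosed (convexHull ℝ (toR2 '' (posQuad \ S))) := by
  classical
  obtain ⟨N, hN2, hNb⟩ := exists_bound hS
  set C : Set (ℝ×ℝ) := {p | 0 ≤ p.1 ∧ 0 ≤ p.2} with hCdef
  have hCconv : Convex ℝ C := by
    have h1 : Convex ℝ {p : ℝ×ℝ | 0 ≤ p.1} :=
      convex_halfSpace_ge (⟨fun _ _ => rfl, fun _ _ => rfl⟩ : IsLinearMap ℝ fun p : ℝ×ℝ => p.1) 0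
    have h2 : Convex ℝ {p : ℝ×ℝ | 0 ≤ p.2} :=
      convex_halfSpace_ge (⟨fun _ _ => rfl, fun _ _ => rfl⟩ : IsLinearMap ℝ fun p : ℝ×ℝ => p.2) 0
    exact h1.inter h2
  have hCclosed : IsClosed C :=
    (isClosed_le continuous_const continuous_fst).inter (isClosed_le continuous_const continuous_snd)
  set F' : Set (ℕ×ℕ) := {c | c ∈ posQuad \ S ∧ c.1 ≤ N ∧ c.2 ≤ N} with hF'def
  have hF'fin : F'.Finite := by
    apply Set.Finite.subset ((Set.finite_Iic N).prod (Set.finite_Iic N))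
    rintro c ⟨_, h1, h2⟩
    exact ⟨h1, h2⟩
  have hF'sub : F' ⊆ posQuad \ S := fun c hc => hc.1
  -- B ⊆ toR2 '' F' + C
  have hBsub : toR2 '' (posQuad \ S) ⊆ toR2 '' F' + C := by
    rintro z ⟨c, hc, rfl⟩
    have hmemF' : (min c.1 N, min c.2 N) ∈ F' := by
      refine ⟨⟨⟨le_min hc.1.1 (by omega), le_min hc.1.2 (by omega)⟩, ?_⟩,
        min_le_right _ _, min_le_right _ _⟩
      intro hmem
      rcases le_or_gt c.1 N with h1 | h1
      · rcases le_or_gt c.2 N with h2 | h2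
        · rw [min_eq_left h1, min_eq_left h2] at hmem; exact hc.2 hmem
        · rw [min_eq_right h2.le] at hmem; exact absurd (hNb _ hmem).2 (by omega)
      · rw [min_eq_right h1.le] at hmem; exact absurd (hNb _ hmem).1 (by omega)
    have hc1 : ((min c.1 N : ℕ) : ℝ) ≤ (c.1 : ℝ) := by exact_mod_cast min_le_left _ _
    have hc2 : ((min c.2 N : ℕ) : ℝ) ≤ (c.2 : ℝ) := by exact_mod_cast min_le_left _ _
    refine Set.mem_add.mpr ⟨toR2 (min c.1 N, min c.2 N), ⟨_, hmemF', rfl⟩,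
      toR2 c - toR2 (min c.1 N, min c.2 N), ⟨?_, ?_⟩, by abel⟩
    · simp only [toR2, Prod.mk_sub_mk]
      linarith
    · simp only [toR2, Prod.mk_sub_mk]
      linarith
  set D : Set (ℝ×ℝ) := convexHull ℝ (toR2 '' F') + C with hDdef
  have hDconv : Convex ℝ D := (convex_convexHull ℝ _).add hCconv
  have hsub1 : convexHull ℝ (toR2 '' (posQuad \ S)) ⊆ D := by
    apply convexHull_min _ hDconv
    intro z hz
    obtain ⟨x, hx, y, hy, hxy⟩ := Set.mem_add.mp (hBsub hz)
    exact Set.mem_add.mpr ⟨x, subset_convexHull ℝ _ hx, y, hy, hxy⟩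
  have hsub2 : D ⊆ convexHull ℝ (toR2 '' (posQuad \ S)) := by
    rintro z hz
    obtain ⟨x, hx, y, hy, rfl⟩ := Set.mem_add.mp hz
    have hx' : x ∈ convexHull ℝ (toR2 '' (posQuad \ S)) :=
      convexHull_mono (Set.image_mono hF'sub) hx
    exact cB_add_cone hS hx' hy.1 hy.2
  have heq : convexHull ℝ (toR2 '' (posQuad \ S)) = D := subset_antisymm hsub1 hsub2
  rw [heq]
  exact IsClosed.add_left_of_isCompact hCclosed ((hF'fin.image toR2).isCompact_convexHull ℝ)


lemma horiz_mem {T : Set (ℝ×ℝ)} (hT : Convex ℝ T) {a b y x : ℝ}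
    (ha : (a,y) ∈ T) (hb : (b,y) ∈ T) (hax : a ≤ x) (hxb : x ≤ b) : (x,y) ∈ T := by
  rcases eq_or_lt_of_le (le_trans hax hxb) with h | h
  · have hxa : x = a := le_antisymm (h ▸ hxb) hax
    rwa [hxa]
  · set s := (x - a)/(b - a) with hs
    have hba : (0:ℝ) < b - a := by linarith
    have h0 : 0 ≤ s := div_nonneg (by linarith) hba.le
    have h1 : s ≤ 1 := by rw [hs, div_le_one hba]; linarith
    have hmem := hT ha hb (by linarith : (0:ℝ) ≤ 1 - s) h0 (by ring)
    have he : (1-s) • ((a:ℝ),y) + s • ((b:ℝ),y) = (x,y) := by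
      have hxe : (1-s)*a + s*b = x := by rw [hs]; field_simp; ring
      simp only [Prod.smul_mk, Prod.mk_add_mk, smul_eq_mul, Prod.mk.injEq]
      constructor
      · exact hxe
      · ring
    rwa [he] at hmem

lemma vert_mem {T : Set (ℝ×ℝ)} (hT : Convex ℝ T) {x a b y : ℝ}
    (ha : (x,a) ∈ T) (hb : (x,b) ∈ T) (hay : a ≤ y) (hyb : y ≤ b) : (x,y) ∈ T := by
  rcases eq_or_lt_of_le (le_trans hay hyb) with h | h
  · have hya : y = a := le_antisymm (h ▸ hyb) hay
    rwa [hya]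
  · set s := (y - a)/(b - a) with hs
    have hba : (0:ℝ) < b - a := by linarith
    have h0 : 0 ≤ s := div_nonneg (by linarith) hba.le
    have h1 : s ≤ 1 := by rw [hs, div_le_one hba]; linarith
    have hmem := hT ha hb (by linarith : (0:ℝ) ≤ 1 - s) h0 (by ring)
    have he : (1-s) • ((x:ℝ),a) + s • ((x:ℝ),b) = (x,y) := by
      have hye : (1-s)*a + s*b = y := by rw [hs]; field_simp; ring
      simp only [Prod.smul_mk, Prod.mk_add_mk, smul_eq_mul, Prod.mk.injEq]
      constructor
      · ring
      · exact hye
    rwa [he] at hmem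

lemma corner_mem (hS : IsPartitionSet S) (hne : S.Nonempty) : (1,1) ∈ S := by
  obtain ⟨c, hc⟩ := hne
  exact hS.2.2 c hc 1 1 le_rfl (hS.2.1 hc).1 le_rfl (hS.2.1 hc).2

lemma exists_w (hS : IsPartitionSet S) (hne : S.Nonempty) :
    ∃ w : ℕ, 1 ≤ w ∧ (w,1) ∈ S ∧ ∀ c ∈ S, c.1 ≤ w := by
  classical
  have hTne : hS.1.toFinset.Nonempty := by
    rwa [Set.Finite.toFinset_nonempty]
  obtain ⟨c0, hc0T, hsup⟩ := Finset.exists_mem_eq_sup hS.1.toFinset hTne (fun c : ℕ×ℕ => c.1)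
  have hc0 : c0 ∈ S := hS.1.mem_toFinset.mp hc0T
  refine ⟨hS.1.toFinset.sup (fun c : ℕ×ℕ => c.1), ?_, ?_, ?_⟩
  · rw [hsup]; exact (hS.2.1 hc0).1
  · rw [hsup]
    exact hS.2.2 c0 hc0 c0.1 1 (hS.2.1 hc0).1 le_rfl le_rfl (hS.2.1 hc0).2
  · intro c hc
    exact Finset.le_sup (hS.1.mem_toFinset.mpr hc)


lemma seg_extract_top {T : Set (ℝ×ℝ)} {z1 z2 : ℝ} {x₁ x₂ : ℝ×ℝ} (hx₁ : x₁ ∈ T) (hx₂ : x₂ ∈ T)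
    (hseg : (z1, z2) ∈ openSegment ℝ x₁ x₂) (hne : x₁ = (z1,z2) → x₂ ≠ (z1,z2))
    (htop : ∀ u : ℝ×ℝ, u ∈ T → u.1 = z1 → u.2 ≤ z2) :
    ∃ A1 B1 A2 B2 t : ℝ, ((A1,B1) ∈ T) ∧ ((A2,B2) ∈ T) ∧ A1 < z1 ∧ z1 < A2 ∧
      (1-t)*A1 + t*A2 = z1 ∧ (1-t)*B1 + t*B2 = z2 := by
  obtain ⟨a, b, ha, hb, hab, habe⟩ := hseg
  have h₁ : a * x₁.1 + b * x₂.1 = z1 := by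
    have := congrArg Prod.fst habe
    simpa [Prod.fst_add, Prod.smul_fst, smul_eq_mul] using this
  have h₂ : a * x₁.2 + b * x₂.2 = z2 := by
    have := congrArg Prod.snd habe
    simpa [Prod.snd_add, Prod.smul_snd, smul_eq_mul] using this
  have hxne : x₁.1 ≠ x₂.1 := by
    intro hcoord
    rw [← hcoord] at h₁
    have hx11 : x₁.1 = z1 := by linear_combination h₁ - x₁.1 * hab
    have hx21 : x₂.1 = z1 := by rw [← hcoord]; exact hx11
    have hb1 : x₁.2 ≤ z2 := htop x₁ hx₁ hx11
    have hb2 : x₂.2 ≤ z2 := htop x₂ hx₂ hx21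
    have hz : a * z2 + b * z2 = z2 := by linear_combination z2 * hab
    have k1 : b * x₂.2 ≤ b * z2 := mul_le_mul_of_nonneg_left hb2 hb.le
    have k2 : a * x₁.2 ≤ a * z2 := mul_le_mul_of_nonneg_left hb1 ha.le
    have he1 : x₁.2 = z2 := le_antisymm hb1 (le_of_mul_le_mul_left (by linarith) ha)
    have he2 : x₂.2 = z2 := le_antisymm hb2 (le_of_mul_le_mul_left (by linarith) hb)
    exact hne (Prod.ext hx11 he1) (Prod.ext hx21 he2)
  have hz1id : a * x₁.1 + b * x₁.1 = x₁.1 := by linear_combination x₁.1 * hab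
  have hz2id : a * x₂.1 + b * x₂.1 = x₂.1 := by linear_combination x₂.1 * hab
  rcases lt_or_gt_of_ne hxne with hlt | hgt
  · have k1 : b * x₁.1 < b * x₂.1 := mul_lt_mul_of_pos_left hlt hb
    have k2 : a * x₁.1 < a * x₂.1 := mul_lt_mul_of_pos_left hlt ha
    refine ⟨x₁.1, x₁.2, x₂.1, x₂.2, b, by simpa using hx₁, by simpa using hx₂,
      by linarith, by linarith, ?_, ?_⟩
    · rw [show (1-b) = a by linarith]; exact h₁
    · rw [show (1-b) = a by linarith]; exact h₂
  · have k1 : b * x₂.1 < b * x₁.1 := mul_lt_mul_of_pos_left hgt hb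
    have k2 : a * x₂.1 < a * x₁.1 := mul_lt_mul_of_pos_left hgt ha
    refine ⟨x₂.1, x₂.2, x₁.1, x₁.2, a, by simpa using hx₂, by simpa using hx₁,
      by linarith, by linarith, ?_, ?_⟩
    · rw [show (1-a) = b by linarith]; linarith
    · rw [show (1-a) = b by linarith]; linarith

lemma seg_extract_bot {T : Set (ℝ×ℝ)} {z1 z2 : ℝ} {x₁ x₂ : ℝ×ℝ} (hx₁ : x₁ ∈ T) (hx₂ : x₂ ∈ T)
    (hseg : (z1, z2) ∈ openSegment ℝ x₁ x₂) (hne : x₁ = (z1,z2) → x₂ ≠ (z1,z2))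
    (hbot : ∀ u : ℝ×ℝ, u ∈ T → u.1 = z1 → z2 ≤ u.2) :
    ∃ A1 B1 A2 B2 t : ℝ, ((A1,B1) ∈ T) ∧ ((A2,B2) ∈ T) ∧ A1 < z1 ∧ z1 < A2 ∧
      (1-t)*A1 + t*A2 = z1 ∧ (1-t)*B1 + t*B2 = z2 := by
  obtain ⟨a, b, ha, hb, hab, habe⟩ := hseg
  have h₁ : a * x₁.1 + b * x₂.1 = z1 := by
    have := congrArg Prod.fst habe
    simpa [Prod.fst_add, Prod.smul_fst, smul_eq_mul] using this
  have h₂ : a * x₁.2 + b * x₂.2 = z2 := by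
    have := congrArg Prod.snd habe
    simpa [Prod.snd_add, Prod.smul_snd, smul_eq_mul] using this
  have hxne : x₁.1 ≠ x₂.1 := by
    intro hcoord
    rw [← hcoord] at h₁
    have hx11 : x₁.1 = z1 := by linear_combination h₁ - x₁.1 * hab
    have hx21 : x₂.1 = z1 := by rw [← hcoord]; exact hx11
    have hb1 : z2 ≤ x₁.2 := hbot x₁ hx₁ hx11
    have hb2 : z2 ≤ x₂.2 := hbot x₂ hx₂ hx21
    have hz : a * z2 + b * z2 = z2 := by linear_combination z2 * hab
    have k1 : b * z2 ≤ b * x₂.2 := mul_le_mul_of_nonneg_left hb2 hb.le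
    have k2 : a * z2 ≤ a * x₁.2 := mul_le_mul_of_nonneg_left hb1 ha.le
    have he1 : x₁.2 = z2 := le_antisymm (le_of_mul_le_mul_left (by linarith) ha) hb1
    have he2 : x₂.2 = z2 := le_antisymm (le_of_mul_le_mul_left (by linarith) hb) hb2
    exact hne (Prod.ext hx11 he1) (Prod.ext hx21 he2)
  have hz1id : a * x₁.1 + b * x₁.1 = x₁.1 := by linear_combination x₁.1 * hab
  have hz2id : a * x₂.1 + b * x₂.1 = x₂.1 := by linear_combination x₂.1 * hab
  rcases lt_or_gt_of_ne hxne with hlt | hgt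
  · have k1 : b * x₁.1 < b * x₂.1 := mul_lt_mul_of_pos_left hlt hb
    have k2 : a * x₁.1 < a * x₂.1 := mul_lt_mul_of_pos_left hlt ha
    refine ⟨x₁.1, x₁.2, x₂.1, x₂.2, b, by simpa using hx₁, by simpa using hx₂,
      by linarith, by linarith, ?_, ?_⟩
    · rw [show (1-b) = a by linarith]; exact h₁
    · rw [show (1-b) = a by linarith]; exact h₂
  · have k1 : b * x₂.1 < b * x₁.1 := mul_lt_mul_of_pos_left hgt hb
    have k2 : a * x₂.1 < a * x₁.1 := mul_lt_mul_of_pos_left hgt ha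
    refine ⟨x₂.1, x₂.2, x₁.1, x₁.2, a, by simpa using hx₂, by simpa using hx₁,
      by linarith, by linarith, ?_, ?_⟩
    · rw [show (1-a) = b by linarith]; linarith
    · rw [show (1-a) = b by linarith]; linarith

lemma linFst : IsLinearMap ℝ (fun p : ℝ×ℝ => p.1) := ⟨fun _ _ => rfl, fun _ _ => rfl⟩
lemma linSnd : IsLinearMap ℝ (fun p : ℝ×ℝ => p.2) := ⟨fun _ _ => rfl, fun _ _ => rfl⟩

set_option maxHeartbeats 1600000 in
lemma hulls_disjoint (hS : IsPartitionSet S) (hne : S.Nonempty)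
    (h1 : Set.extremePoints ℝ (convexHull ℝ (toR2 '' S)) ∩
          convexHull ℝ (toR2 '' (posQuad \ S)) = ∅)
    (h2 : Set.extremePoints ℝ (convexHull ℝ (toR2 '' (posQuad \ S))) ∩
          convexHull ℝ (toR2 '' S) = ∅) :
    convexHull ℝ (toR2 '' S) ∩ convexHull ℝ (toR2 '' (posQuad \ S)) = ∅ := by
  classical
  by_contra hcon
  obtain ⟨p, hpF, hpB⟩ := Set.nonempty_iff_ne_empty.mpr hcon
  obtain ⟨N, hN2, hNb⟩ := exists_bound hS
  obtain ⟨w, hw1, hwS, hwb⟩ := exists_w hS hne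
  have h11 : (1,1) ∈ S := corner_mem hS hne
  set F : Set (ℝ×ℝ) := convexHull ℝ (toR2 '' S) with hFdef
  set cB : Set (ℝ×ℝ) := convexHull ℝ (toR2 '' (posQuad \ S)) with hcBdef
  have hFconv : Convex ℝ F := convex_convexHull ℝ _
  have hBconv : Convex ℝ cB := convex_convexHull ℝ _
  have hFcomp : IsCompact F := (hS.1.image toR2).isCompact_convexHull ℝ
  have hFclosed : IsClosed F := hFcomp.isClosed
  have hBclosed : IsClosed cB := cB_closed hS
  -- bounds
  have hF1 : ∀ z ∈ F, 1 ≤ z.1 := by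
    intro z hz
    refine convexHull_min ?_ (convex_halfSpace_ge linFst 1) hz
    rintro _ ⟨c, hc, rfl⟩
    show (1:ℝ) ≤ (c.1:ℝ)
    exact_mod_cast (hS.2.1 hc).1
  have hF2 : ∀ z ∈ F, z.1 ≤ (w:ℝ) := by
    intro z hz
    refine convexHull_min ?_ (convex_halfSpace_le linFst (w:ℝ)) hz
    rintro _ ⟨c, hc, rfl⟩
    show (c.1:ℝ) ≤ (w:ℝ)
    exact_mod_cast hwb c hc
  have hF3 : ∀ z ∈ F, 1 ≤ z.2 := by
    intro z hz
    refine convexHull_min ?_ (convex_halfSpace_ge linSnd 1) hz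
    rintro _ ⟨c, hc, rfl⟩
    show (1:ℝ) ≤ (c.2:ℝ)
    exact_mod_cast (hS.2.1 hc).2
  have hF4 : ∀ z ∈ F, z.2 ≤ (N:ℝ) := by
    intro z hz
    refine convexHull_min ?_ (convex_halfSpace_le linSnd (N:ℝ)) hz
    rintro _ ⟨c, hc, rfl⟩
    show (c.2:ℝ) ≤ (N:ℝ)
    exact_mod_cast (hNb c hc).2.le
  have hB1 : ∀ z ∈ cB, 1 ≤ z.1 := by
    intro z hz
    refine convexHull_min ?_ (convex_halfSpace_ge linFst 1) hz
    rintro _ ⟨c, hc, rfl⟩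
    show (1:ℝ) ≤ (c.1:ℝ)
    exact_mod_cast hc.1.1
  have hB2 : ∀ z ∈ cB, 1 ≤ z.2 := by
    intro z hz
    refine convexHull_min ?_ (convex_halfSpace_ge linSnd 1) hz
    rintro _ ⟨c, hc, rfl⟩
    show (1:ℝ) ≤ (c.2:ℝ)
    exact_mod_cast hc.1.2
  -- nonempty slices
  have hA_base : ∀ x : ℝ, 1 ≤ x → x ≤ (w:ℝ) → ((x,(1:ℝ)) ∈ F) := by
    intro x hx1 hxw
    have m1 : ((1:ℝ),(1:ℝ)) ∈ F := subset_convexHull ℝ _ ⟨(1,1), h11, by simp [toR2]⟩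
    have m2 : ((w:ℝ),(1:ℝ)) ∈ F := subset_convexHull ℝ _ ⟨(w,1), hwS, by simp [toR2]⟩
    exact horiz_mem hFconv m1 m2 hx1 hxw
  have hB_base : ∀ x : ℝ, 1 ≤ x → ((x,(N:ℝ)) ∈ cB) := by
    intro x hx1
    set n : ℕ := ⌊x⌋₊ with hn
    have hn1 : 1 ≤ n := Nat.le_floor (by exact_mod_cast hx1)
    have hnotS : ∀ k : ℕ, 1 ≤ k → (k, N) ∈ posQuad \ S := by
      intro k hk
      refine ⟨⟨hk, by omega⟩, fun hmem => ?_⟩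
      exact absurd (hNb _ hmem).2 (by simp)
    have m1 : ((n:ℝ),(N:ℝ)) ∈ cB := subset_convexHull ℝ _ ⟨(n,N), hnotS n hn1, by simp [toR2]⟩
    have m2 : (((n:ℝ)+1),(N:ℝ)) ∈ cB := subset_convexHull ℝ _
      ⟨(n+1,N), hnotS (n+1) (by omega), by simp [toR2]⟩
    exact horiz_mem hBconv m1 m2 (Nat.floor_le (by linarith)) (by
      have := Nat.lt_floor_add_one x
      linarith)
  -- slice functions
  set f : ℝ → ℝ := fun x => sSup {y | (x,y) ∈ F} with hfdef
  set g : ℝ → ℝ := fun x => sInf {y | (x,y) ∈ cB} with hgdef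
  have hAslice_bdd : ∀ x : ℝ, BddAbove {y | (x,y) ∈ F} :=
    fun x => ⟨N, fun y hy => hF4 _ hy⟩
  have hBslice_bdd : ∀ x : ℝ, BddBelow {y | (x,y) ∈ cB} :=
    fun x => ⟨1, fun y hy => hB2 _ hy⟩
  have hfub : ∀ x y : ℝ, (x,y) ∈ F → y ≤ f x := fun x y hy => le_csSup (hAslice_bdd x) hy
  have hglb : ∀ x y : ℝ, (x,y) ∈ cB → g x ≤ y := fun x y hy => csInf_le (hBslice_bdd x) hy
  have hfmem : ∀ x : ℝ, 1 ≤ x → x ≤ (w:ℝ) → (x, f x) ∈ F := by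
    intro x hx1 hxw
    have hclosed : IsClosed {y | (x,y) ∈ F} :=
      hFclosed.preimage (Continuous.prodMk_right x)
    have hcomp : IsCompact {y | (x,y) ∈ F} := by
      refine (isCompact_Icc (a := (1:ℝ)) (b := (N:ℝ))).of_isClosed_subset hclosed ?_
      exact fun y hy => ⟨hF3 _ hy, hF4 _ hy⟩
    exact hcomp.sSup_mem ⟨1, hA_base x hx1 hxw⟩
  have hgmem : ∀ x : ℝ, 1 ≤ x → (x, g x) ∈ cB := by
    intro x hx1
    have hclosed : IsClosed {y | (x,y) ∈ cB} :=
      hBclosed.preimage (Continuous.prodMk_right x)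
    exact hclosed.csInf_mem ⟨N, hB_base x hx1⟩ (hBslice_bdd x)
  have hgleN : ∀ x : ℝ, 1 ≤ x → g x ≤ (N:ℝ) := fun x hx => hglb x N (hB_base x hx)
  have hf1 : ∀ x : ℝ, 1 ≤ x → x ≤ (w:ℝ) → 1 ≤ f x := fun x hx1 hxw =>
    hfub x 1 (hA_base x hx1 hxw)
  -- concavity / convexity
  have hconcave : ∀ a₁ a₂ s : ℝ, 1 ≤ a₁ → a₁ ≤ (w:ℝ) → 1 ≤ a₂ → a₂ ≤ (w:ℝ) →
      0 ≤ s → s ≤ 1 → (1-s) * f a₁ + s * f a₂ ≤ f ((1-s)*a₁ + s*a₂) := by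
    intro a₁ a₂ s h11' h12 h21 h22 hs0 hs1
    have hm := hFconv (hfmem a₁ h11' h12) (hfmem a₂ h21 h22)
      (by linarith : (0:ℝ) ≤ 1 - s) hs0 (by ring)
    have he : (1-s) • ((a₁:ℝ), f a₁) + s • ((a₂:ℝ), f a₂)
        = ((1-s)*a₁ + s*a₂, (1-s) * f a₁ + s * f a₂) := by
      simp [Prod.smul_mk, Prod.mk_add_mk, smul_eq_mul]
    rw [he] at hm
    exact hfub _ _ hm
  have hgconvexx : ∀ a₁ a₂ s : ℝ, 1 ≤ a₁ → 1 ≤ a₂ →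
      0 ≤ s → s ≤ 1 → g ((1-s)*a₁ + s*a₂) ≤ (1-s) * g a₁ + s * g a₂ := by
    intro a₁ a₂ s h11' h21 hs0 hs1
    have hm := hBconv (hgmem a₁ h11') (hgmem a₂ h21)
      (by linarith : (0:ℝ) ≤ 1 - s) hs0 (by ring)
    have he : (1-s) • ((a₁:ℝ), g a₁) + s • ((a₂:ℝ), g a₂)
        = ((1-s)*a₁ + s*a₂, (1-s) * g a₁ + s * g a₂) := by
      simp [Prod.smul_mk, Prod.mk_add_mk, smul_eq_mul]
    rw [he] at hm
    exact hglb _ _ hm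
  -- optimization domain
  set G : Set (ℝ × ℝ × ℝ) :=
    {q | (q.1, q.2.1) ∈ F ∧ (q.1, q.2.2) ∈ cB ∧ q.2.2 ≤ (N:ℝ)} with hGdef
  have hGclosed : IsClosed G := by
    have c1 : IsClosed {q : ℝ×ℝ×ℝ | (q.1, q.2.1) ∈ F} := hFclosed.preimage (by fun_prop)
    have c2 : IsClosed {q : ℝ×ℝ×ℝ | (q.1, q.2.2) ∈ cB} := hBclosed.preimage (by fun_prop)
    have c3 : IsClosed {q : ℝ×ℝ×ℝ | q.2.2 ≤ (N:ℝ)} :=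
      isClosed_le (continuous_snd.snd) continuous_const
    have heq : G = {q : ℝ×ℝ×ℝ | (q.1, q.2.1) ∈ F} ∩
        ({q : ℝ×ℝ×ℝ | (q.1, q.2.2) ∈ cB} ∩ {q : ℝ×ℝ×ℝ | q.2.2 ≤ (N:ℝ)}) := rfl
    rw [heq]
    exact c1.inter (c2.inter c3)
  have hGsub : G ⊆ Icc 1 (w:ℝ) ×ˢ (Icc 1 (N:ℝ) ×ˢ Icc 1 (N:ℝ)) := by
    rintro q ⟨hq1, hq2, hq3⟩
    exact ⟨⟨hF1 _ hq1, hF2 _ hq1⟩, ⟨(hF3 (q.1, q.2.1) hq1 : _), hF4 _ hq1⟩, ⟨(hB2 (q.1, q.2.2) hq2 : _), hq3⟩⟩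
  have hGcomp : IsCompact G :=
    ((isCompact_Icc.prod (isCompact_Icc.prod isCompact_Icc))).of_isClosed_subset hGclosed hGsub
  have hp1w : 1 ≤ p.1 ∧ p.1 ≤ (w:ℝ) := ⟨hF1 _ hpF, hF2 _ hpF⟩
  have hq0 : ((p.1, p.2, g p.1) : ℝ × ℝ × ℝ) ∈ G := by
    refine ⟨?_, hgmem p.1 hp1w.1, hgleN p.1 hp1w.1⟩
    simpa using hpF
  obtain ⟨q₁, hq₁G, hq₁max⟩ := hGcomp.exists_isMaxOn ⟨_, hq0⟩
    ((continuous_snd.fst.sub continuous_snd.snd).continuousOn)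
  set m : ℝ := q₁.2.1 - q₁.2.2 with hmdef
  have K1 : ∀ x : ℝ, 1 ≤ x → x ≤ (w:ℝ) → f x - g x ≤ m := by
    intro x hx1 hxw
    have hmem : ((x, f x, g x) : ℝ × ℝ × ℝ) ∈ G :=
      ⟨hfmem x hx1 hxw, hgmem x hx1, hgleN x hx1⟩
    exact hq₁max hmem
  have K2 : 0 ≤ m := by
    have hfp : p.2 ≤ f p.1 := hfub p.1 p.2 (by simpa using hpF)
    have hgp : g p.1 ≤ p.2 := hglb p.1 p.2 (by simpa using hpB)
    have := K1 p.1 hp1w.1 hp1w.2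
    linarith
  set G2 : Set (ℝ × ℝ × ℝ) := G ∩ {q | q.2.1 - q.2.2 = m} with hG2def
  have hG2closed : IsClosed G2 := hGclosed.inter
    (isClosed_eq (by fun_prop) continuous_const)
  have hG2comp : IsCompact G2 := hGcomp.of_isClosed_subset hG2closed inter_subset_left
  obtain ⟨q₂, hq₂G2, hq₂min⟩ := hG2comp.exists_isMinOn ⟨q₁, hq₁G, rfl⟩
    (continuous_fst.continuousOn)
  set α : ℝ := q₂.1 with hαdef
  have hα1 : 1 ≤ α := hF1 _ hq₂G2.1.1
  have hαw : α ≤ (w:ℝ) := hF2 _ hq₂G2.1.1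
  have K3 : f α - g α = m := by
    have hle : f α - g α ≤ m := K1 α hα1 hαw
    have h1' : q₂.2.1 ≤ f α := hfub _ _ hq₂G2.1.1
    have h2' : g α ≤ q₂.2.2 := hglb _ _ hq₂G2.1.2.1
    have heq : q₂.2.1 - q₂.2.2 = m := hq₂G2.2
    linarith
  have K4 : ∀ x : ℝ, 1 ≤ x → x ≤ (w:ℝ) → f x - g x = m → α ≤ x := by
    intro x hx1 hxw hx
    have hmem : ((x, f x, g x) : ℝ × ℝ × ℝ) ∈ G2 :=
      ⟨⟨hfmem x hx1 hxw, hgmem x hx1, hgleN x hx1⟩, hx⟩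
    exact hq₂min hmem
  -- cone stability of cB, phrased locally
  have hcone : ∀ z ∈ cB, ∀ v : ℝ×ℝ, 0 ≤ v.1 → 0 ≤ v.2 → z + v ∈ cB := by
    rw [hcBdef]
    exact fun z hz v hv1 hv2 => cB_add_cone hS hz hv1 hv2
  -- case analysis at α
  by_cases hext1 : (α, f α) ∈ Set.extremePoints ℝ F
  · have hmemB : (α, f α) ∈ cB := by
      have hg := hgmem α hα1
      have he : (α, f α) = (α, g α) + ((0:ℝ), f α - g α) := by
        simp only [Prod.mk_add_mk, Prod.mk.injEq]
        constructor <;> ring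
      rw [he]
      exact hcone _ hg _ le_rfl (by rw [K3]; exact K2)
    have hbad : (α, f α) ∈ Set.extremePoints ℝ F ∩ cB := ⟨hext1, hmemB⟩
    rw [h1] at hbad
    exact hbad
  by_cases hext2 : (α, g α) ∈ Set.extremePoints ℝ cB
  · have hgα1 : 1 ≤ g α := hB2 _ (hgmem α hα1)
    have hgαf : g α ≤ f α := by
      have := K3; have := K2; linarith
    have hmemF : (α, g α) ∈ F :=
      vert_mem hFconv (hA_base α hα1 hαw) (hfmem α hα1 hαw) hgα1 hgαf
    have hbad : (α, g α) ∈ Set.extremePoints ℝ cB ∩ F := ⟨hext2, hmemF⟩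
    rw [h2] at hbad
    exact hbad
  -- both non-extreme: pinch
  rw [mem_extremePoints] at hext1 hext2
  push_neg at hext1 hext2
  have hmemFα : (α, f α) ∈ F := hfmem α hα1 hαw
  have hmemBα : (α, g α) ∈ cB := hgmem α hα1
  obtain ⟨x₁, hx₁, x₂, hx₂, hsegA, hneA⟩ := hext1 hmemFα
  obtain ⟨y₁, hy₁, y₂, hy₂, hsegB, hneB⟩ := hext2 hmemBα
  have htop : ∀ u : ℝ×ℝ, u ∈ F → u.1 = α → u.2 ≤ f α := by
    intro u hu h
    have hmem : (α, u.2) ∈ F := by rw [← h]; simpa using hu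
    exact hfub α u.2 hmem
  have hbot : ∀ u : ℝ×ℝ, u ∈ cB → u.1 = α → g α ≤ u.2 := by
    intro u hu h
    have hmem : (α, u.2) ∈ cB := by rw [← h]; simpa using hu
    exact hglb α u.2 hmem
  obtain ⟨a₁, b₁, a₂, b₂, t, hm1, hm2, ha₁α, hαa₂, hc1, hc2⟩ :=
    seg_extract_top hx₁ hx₂ hsegA hneA htop
  obtain ⟨a₁', b₁', a₂', b₂', u, hm1', hm2', ha₁'α, hαa₂', hc1', hc2'⟩ :=
    seg_extract_bot hy₁ hy₂ hsegB hneB hbot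
  have h1a₁ : 1 ≤ a₁ := hF1 _ hm1
  have ha₂w : a₂ ≤ (w:ℝ) := hF2 _ hm2
  have h1a₁' : 1 ≤ a₁' := hB1 _ hm1'
  set c : ℝ := max a₁ a₁' with hcdef
  set d : ℝ := min a₂ a₂' with hddef
  have hcα : c < α := max_lt ha₁α ha₁'α
  have hαd : α < d := lt_min hαa₂ hαa₂'
  have h1c : 1 ≤ c := le_trans h1a₁ (le_max_left _ _)
  have hdw : d ≤ (w:ℝ) := le_trans (min_le_left _ _) ha₂w
  have hden : (0:ℝ) < a₂ - a₁ := by linarith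
  have hden' : (0:ℝ) < a₂' - a₁' := by linarith
  set lA : ℝ → ℝ := fun x => ((a₂ - x)*b₁ + (x - a₁)*b₂)/(a₂ - a₁) with hlA
  set lB : ℝ → ℝ := fun x => ((a₂' - x)*b₁' + (x - a₁')*b₂')/(a₂' - a₁') with hlB
  have hlAα : lA α = f α := by
    rw [hlA]
    field_simp
    linear_combination (b₁ - b₂) * hc1 + (a₂ - a₁) * hc2
  have hlBα : lB α = g α := by
    rw [hlB]
    field_simp
    linear_combination (b₁' - b₂') * hc1' + (a₂' - a₁') * hc2'
  have hlemA : ∀ x : ℝ, a₁ ≤ x → x ≤ a₂ → lA x ≤ f x := by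
    intro x hxl hxr
    set s : ℝ := (x - a₁)/(a₂ - a₁) with hsdef
    have hs0 : 0 ≤ s := div_nonneg (by linarith) hden.le
    have hs1 : s ≤ 1 := by rw [hsdef, div_le_one hden]; linarith
    have hxe : (1-s)*a₁ + s*a₂ = x := by rw [hsdef]; field_simp; ring
    have hcc := hconcave a₁ a₂ s h1a₁ (by linarith) (by linarith) ha₂w hs0 hs1
    rw [hxe] at hcc
    have hfa₁ : b₁ ≤ f a₁ := hfub _ _ hm1
    have hfa₂ : b₂ ≤ f a₂ := hfub _ _ hm2
    have hval : lA x = (1-s)*b₁ + s*b₂ := by rw [hlA, hsdef]; field_simp; try ring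
    have k1 : (1-s)*b₁ ≤ (1-s)*(f a₁) := mul_le_mul_of_nonneg_left hfa₁ (by linarith)
    have k2 : s*b₂ ≤ s*(f a₂) := mul_le_mul_of_nonneg_left hfa₂ hs0
    linarith
  have hlemB : ∀ x : ℝ, a₁' ≤ x → x ≤ a₂' → g x ≤ lB x := by
    intro x hxl hxr
    set s : ℝ := (x - a₁')/(a₂' - a₁') with hsdef
    have hs0 : 0 ≤ s := div_nonneg (by linarith) hden'.le
    have hs1 : s ≤ 1 := by rw [hsdef, div_le_one hden']; linarith
    have hxe : (1-s)*a₁' + s*a₂' = x := by rw [hsdef]; field_simp; ring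
    have hcc := hgconvexx a₁' a₂' s h1a₁' (by linarith) hs0 hs1
    rw [hxe] at hcc
    have hga₁ : g a₁' ≤ b₁' := hglb _ _ hm1'
    have hga₂ : g a₂' ≤ b₂' := hglb _ _ hm2'
    have hval : lB x = (1-s)*b₁' + s*b₂' := by rw [hlB, hsdef]; field_simp; try ring
    have k1 : (1-s)*(g a₁') ≤ (1-s)*b₁' := mul_le_mul_of_nonneg_left hga₁ (by linarith)
    have k2 : s*(g a₂') ≤ s*b₂' := mul_le_mul_of_nonneg_left hga₂ hs0
    linarith
  have hca : a₁ ≤ c := le_max_left _ _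
  have hca' : a₁' ≤ c := le_max_right _ _
  have hda : d ≤ a₂ := min_le_left _ _
  have hda' : d ≤ a₂' := min_le_right _ _
  have hLc : lA c - lB c ≤ f c - g c :=
    sub_le_sub (hlemA c hca (by linarith)) (hlemB c hca' (by linarith))
  have hLd : lA d - lB d ≤ f d - g d :=
    sub_le_sub (hlemA d (by linarith) hda) (hlemB d (by linarith) hda')
  have hhc : f c - g c ≤ m := K1 c h1c (by linarith)
  have hhd : f d - g d ≤ m := K1 d (by linarith) hdw
  set τ : ℝ := (α - c)/(d - c) with hτ
  have hdc : (0:ℝ) < d - c := by linarith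
  have hτ0 : 0 < τ := div_pos (by linarith) hdc
  have hτ1 : τ < 1 := by rw [hτ, div_lt_one hdc]; linarith
  have hαcd : (1-τ)*c + τ*d = α := by rw [hτ]; field_simp; ring
  have haffA : lA ((1-τ)*c + τ*d) = (1-τ)*(lA c) + τ*(lA d) := by
    rw [hlA]; field_simp; ring
  have haffB : lB ((1-τ)*c + τ*d) = (1-τ)*(lB c) + τ*(lB d) := by
    rw [hlB]; field_simp; ring
  rw [hαcd] at haffA haffB
  have hm_eq : lA α - lB α = m := by rw [hlAα, hlBα]; exact K3
  have hLd_le : lA d - lB d ≤ m := le_trans hLd hhd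
  -- m ≤ lA c - lB c
  have hτY : τ*(lA d - lB d) ≤ τ*m := mul_le_mul_of_nonneg_left hLd_le hτ0.le
  have hkey : (1-τ)*m ≤ (1-τ)*(lA c - lB c) := by
    linarith [hm_eq, haffA, haffB, hτY]
  have hLc_ge : m ≤ lA c - lB c := le_of_mul_le_mul_left hkey (by linarith)
  have hfc : f c - g c = m := le_antisymm hhc (by linarith)
  have hcon2 := K4 c h1c (by linarith) hfc
  linarith



end

set_option maxHeartbeats 1600000 in
/-- a partition is triangular iff no vertex (extreme point) of the
convex hull of its Ferrers diagram lies in the convex hull of the complement,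
and vice versa. -/
theorem stmt1 (S : Set (ℕ × ℕ)) (hS : IsPartitionSet S) :
    IsTriangularSet S ↔
      (Set.extremePoints ℝ (convexHull ℝ (toR2 '' S)) ∩
          convexHull ℝ (toR2 '' (posQuad \ S)) = ∅ ∧
        Set.extremePoints ℝ (convexHull ℝ (toR2 '' (posQuad \ S))) ∩
          convexHull ℝ (toR2 '' S) = ∅) := by
  constructor
  · rintro ⟨r, s, hr, hs, hSeq⟩
    have hlin : IsLinearMap ℝ (fun z : ℝ×ℝ => z.1/r + z.2/s) := by
      constructor
      · intro x y
        simp only [Prod.fst_add, Prod.snd_add]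
        ring
      · intro c x
        simp only [Prod.smul_fst, Prod.smul_snd, smul_eq_mul]
        ring
    have hFle : ∀ z ∈ convexHull ℝ (toR2 '' S), z.1/r + z.2/s ≤ 1 := by
      intro z hz
      refine convexHull_min ?_ (convex_halfSpace_le hlin 1) hz
      rintro _ ⟨c, hc, rfl⟩
      rw [hSeq] at hc
      exact hc.2.2
    have hBgt : ∀ z ∈ convexHull ℝ (toR2 '' (posQuad \ S)), 1 < z.1/r + z.2/s := by
      intro z hz
      refine convexHull_min ?_ (convex_halfSpace_gt hlin 1) hz
      rintro _ ⟨c, hc, rfl⟩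
      show (1:ℝ) < (c.1:ℝ)/r + (c.2:ℝ)/s
      by_contra hle
      push_neg at hle
      exact hc.2 (by rw [hSeq]; exact ⟨hc.1.1, hc.1.2, hle⟩)
    constructor
    · rw [eq_empty_iff_forall_notMem]
      rintro z ⟨hz1, hz2⟩
      have h1' := hFle z (extremePoints_subset hz1)
      have h2' := hBgt z hz2
      linarith
    · rw [eq_empty_iff_forall_notMem]
      rintro z ⟨hz1, hz2⟩
      have h1' := hBgt z (extremePoints_subset hz1)
      have h2' := hFle z hz2
      linarith
  · rintro ⟨h1, h2⟩
    rcases Set.eq_empty_or_nonempty S with hSe | hne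
    · refine ⟨1/2, 1/2, by norm_num, by norm_num, ?_⟩
      rw [hSe]
      ext c
      simp only [mem_empty_iff_false, false_iff, mem_setOf_eq, not_and, not_le]
      intro h1c h2c
      have e1 : (1:ℝ) ≤ (c.1:ℝ) := by exact_mod_cast h1c
      have e2 : (1:ℝ) ≤ (c.2:ℝ) := by exact_mod_cast h2c
      have e3 : (c.1:ℝ)/(1/2) + (c.2:ℝ)/(1/2) = 2*(c.1:ℝ) + 2*(c.2:ℝ) := by ring
      linarith
    · have hdisj := hulls_disjoint hS hne h1 h2
      obtain ⟨N, hN2, hNb⟩ := exists_bound hS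
      have hNr : (2:ℝ) ≤ (N:ℝ) := by exact_mod_cast hN2
      have hFcomp : IsCompact (convexHull ℝ (toR2 '' S)) :=
        (hS.1.image toR2).isCompact_convexHull ℝ
      obtain ⟨φ, u, v, hu, huv, hv⟩ := geometric_hahn_banach_compact_closed
        (convex_convexHull ℝ _) hFcomp (convex_convexHull ℝ _) (cB_closed hS)
        (Set.disjoint_iff_inter_eq_empty.mpr hdisj)
      set A : ℝ := φ (1,0) with hA
      set Bc : ℝ := φ (0,1) with hB
      have hφ : ∀ z : ℝ×ℝ, φ z = z.1 * A + z.2 * Bc := by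
        intro z
        have hz : z = z.1 • ((1:ℝ),(0:ℝ)) + z.2 • ((0:ℝ),(1:ℝ)) := by
          simp [Prod.ext_iff, Prod.smul_mk]
        conv_lhs => rw [hz]
        rw [map_add, map_smul, map_smul]
        simp [smul_eq_mul, hA, hB]
      have hmemS : ∀ c ∈ S, (c.1:ℝ) * A + (c.2:ℝ) * Bc < u := by
        intro c hc
        have := hu (toR2 c) (subset_convexHull ℝ _ ⟨c, hc, rfl⟩)
        rw [hφ] at this
        simpa [toR2] using this
      have hmemB : ∀ c ∈ posQuad \ S, v < (c.1:ℝ) * A + (c.2:ℝ) * Bc := by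
        intro c hc
        have := hv (toR2 c) (subset_convexHull ℝ _ ⟨c, hc, rfl⟩)
        rw [hφ] at this
        simpa [toR2] using this
      have h11 := corner_mem hS hne
      have hf11 : 1*A + 1*Bc < u := by
        have := hmemS _ h11
        simpa using this
      have hN1mem : ((N:ℕ),(1:ℕ)) ∈ posQuad \ S := by
        refine ⟨⟨by omega, le_rfl⟩, fun h => ?_⟩
        exact absurd (hNb _ h).1 (lt_irrefl _)
      have h1Nmem : ((1:ℕ),(N:ℕ)) ∈ posQuad \ S := by
        refine ⟨⟨le_rfl, by omega⟩, fun h => ?_⟩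
        exact absurd (hNb _ h).2 (lt_irrefl _)
      have hfN1 : v < (N:ℝ)*A + 1*Bc := by
        have := hmemB _ hN1mem
        simpa using this
      have hf1N : v < 1*A + (N:ℝ)*Bc := by
        have := hmemB _ h1Nmem
        simpa using this
      have hApos : 0 < A := by
        by_contra hA0
        push_neg at hA0
        have hk : ((N:ℝ)-1)*A ≤ 0 := mul_nonpos_of_nonneg_of_nonpos (by linarith) hA0
        nlinarith
      have hBpos : 0 < Bc := by
        by_contra hB0
        push_neg at hB0
        have hk : ((N:ℝ)-1)*Bc ≤ 0 := mul_nonpos_of_nonneg_of_nonpos (by linarith) hB0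
        nlinarith
      set tmid : ℝ := (u+v)/2 with htmid
      have htu : u < tmid := by rw [htmid]; linarith
      have htv : tmid < v := by rw [htmid]; linarith
      have ht0 : 0 < tmid := by linarith
      refine ⟨tmid/A, tmid/Bc, div_pos ht0 hApos, div_pos ht0 hBpos, ?_⟩
      ext c
      simp only [mem_setOf_eq]
      constructor
      · intro hc
        have hq := hS.2.1 hc
        refine ⟨hq.1, hq.2, ?_⟩
        have hlt := hmemS c hc
        have e : (c.1:ℝ)/(tmid/A) + (c.2:ℝ)/(tmid/Bc)
            = ((c.1:ℝ)*A + (c.2:ℝ)*Bc)/tmid := by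
          field_simp
          try ring
        rw [e, div_le_one ht0]
        linarith
      · rintro ⟨hc1, hc2, hc3⟩
        by_contra hns
        have hgt := hmemB c ⟨⟨hc1, hc2⟩, hns⟩
        have e : (c.1:ℝ)/(tmid/A) + (c.2:ℝ)/(tmid/Bc)
            = ((c.1:ℝ)*A + (c.2:ℝ)*Bc)/tmid := by
          field_simp
          try ring
        rw [e, div_le_one ht0] at hc3
        linarith
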